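/- Let A be a commutative K-algebra and δ = (1, δ_1, δ_2, …) a higher derivation (Hasse–Schmidt derivation) over K from A to A. Then for all natural numbers i, k ≥ 0 and x ∈ A in characteristic p > 0: δ_{k·p^i}(x^{p^i}) = (δ_k(x))^{p^i}, and δ_j(x^{p^i}) = 0 whenever p^i does not divide j. -/

import Mathlib

section Aux

variable {K A : Type*} [Field K] [CommRing A] [Algebra K A]

lemma hd_coeff_sum_monomial (g : ℕ → A) (N a : ℕ) (ha : a ≤ N) :
    (∑ m ∈ Finset.range (N + 1), Polynomial.monomial m (g m)).coeff a = g a := by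
  rw [Polynomial.finset_sum_coeff, Finset.sum_eq_single a]
  · simp
  · intro b _ hb; simp [Polynomial.coeff_monomial, hb]
  · intro h; exact absurd (Finset.mem_range.mpr (Nat.lt_succ_of_le ha)) h

lemma hd_coeff_pow (δ : ℕ → A →ₗ[K] A)
    (hleib : ∀ (k : ℕ) (x y : A),
      δ k (x * y) = ∑ ij ∈ Finset.HasAntidiagonal.antidiagonal k, δ ij.1 x * δ ij.2 y)
    (y : A) (N : ℕ) :
    ∀ n, ∀ j ≤ N,
      ((∑ m ∈ Finset.range (N + 1), Polynomial.monomial m (δ m y)) ^ (n + 1)).coeff j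
        = δ j (y ^ (n + 1)) := by
  set f := ∑ m ∈ Finset.range (N + 1), Polynomial.monomial m (δ m y) with hf
  intro n
  induction n with
  | zero => intro j hj; rw [pow_one, pow_one]; exact hd_coeff_sum_monomial (fun m => δ m y) N j hj
  | succ n ih =>
    intro j hj
    have hpow : y ^ (n + 1 + 1) = y ^ (n + 1) * y := by rw [pow_succ]
    rw [pow_succ, Polynomial.coeff_mul, hpow, hleib]
    apply Finset.sum_congr rfl
    intro ij hij
    have h1 : ij.1 ≤ N := le_trans (Finset.HasAntidiagonal.antidiagonal.fst_le hij) hj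
    have h2 : ij.2 ≤ N := le_trans (Finset.HasAntidiagonal.antidiagonal.snd_le hij) hj
    rw [ih ij.1 h1, hd_coeff_sum_monomial (fun m => δ m y) N ij.2 h2]

lemma hd_pow_p (δ : ℕ → A →ₗ[K] A)
    (hleib : ∀ (k : ℕ) (x y : A),
      δ k (x * y) = ∑ ij ∈ Finset.HasAntidiagonal.antidiagonal k, δ ij.1 x * δ ij.2 y)
    (p : ℕ) (hp : p.Prime) [CharP A p] (y : A) (j : ℕ) :
    δ j (y ^ p) = if p ∣ j then (δ (j / p) y) ^ p else 0 := by
  haveI : ExpChar A p := ExpChar.prime hp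
  set f := ∑ m ∈ Finset.range (j + 1), Polynomial.monomial m (δ m y) with hf
  have h1 : δ j (y ^ p) = (f ^ p).coeff j := by
    have := hd_coeff_pow δ hleib y j (p - 1) j le_rfl
    rw [Nat.sub_add_cancel hp.one_lt.le] at this
    rw [this]
  rw [h1, ← Polynomial.map_frobenius_expand p, Polynomial.coeff_map,
    Polynomial.coeff_expand hp.pos]
  split_ifs with h
  · rw [frobenius_def,
      hd_coeff_sum_monomial (fun m => δ m y) j (j / p) (Nat.div_le_self j p)]
  · rw [map_zero]

end Aux

/-- Let `K` be a field of characteristic `p > 0`, `A` a commutative `K`-algebra and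
`δ = (id, δ_1, δ_2, …)` a higher (Hasse–Schmidt) derivation of `A` over `K`.
Then for all `i, k ≥ 0` and `x ∈ A`, `δ_{k·p^i}(x^{p^i}) = (δ_k x)^{p^i}`, and
`δ_j(x^{p^i}) = 0` whenever `p^i` does not divide `j`. -/
theorem higher_derivation_frobenius (K A : Type*) [Field K] [CommRing A] [Algebra K A]
    (p : ℕ) (hp : p.Prime) [CharP K p]
    (δ : ℕ → A →ₗ[K] A) (h0 : δ 0 = LinearMap.id)
    (hleib : ∀ (k : ℕ) (x y : A),
      δ k (x * y) = ∑ ij ∈ Finset.HasAntidiagonal.antidiagonal k, δ ij.1 x * δ ij.2 y) :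
    ∀ (i k : ℕ) (x : A),
      δ (k * p ^ i) (x ^ p ^ i) = (δ k x) ^ p ^ i ∧
      ∀ j : ℕ, ¬ (p ^ i ∣ j) → δ j (x ^ p ^ i) = 0 := by
  rcases subsingleton_or_nontrivial A with hA | hA
  · intro i k x; exact ⟨Subsingleton.elim _ _, fun j _ => Subsingleton.elim _ _⟩
  haveI : CharP A p := charP_of_injective_algebraMap (algebraMap K A).injective p
  intro i
  induction i with
  | zero =>
    intro k x
    exact ⟨by simp, fun j hj => absurd (one_dvd j) hj⟩
  | succ i ih =>
    intro k x
    have hy : x ^ p ^ (i + 1) = (x ^ p ^ i) ^ p := by rw [← pow_mul, pow_succ]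
    constructor
    · rw [hy, hd_pow_p δ hleib p hp]
      have hd : p ∣ k * p ^ (i + 1) := ⟨k * p ^ i, by ring⟩
      rw [if_pos hd]
      have hq : k * p ^ (i + 1) / p = k * p ^ i := by
        rw [pow_succ, ← mul_assoc, Nat.mul_div_cancel _ hp.pos]
      rw [hq, (ih k x).1, ← pow_mul, ← pow_succ]
    · intro j hj
      rw [hy, hd_pow_p δ hleib p hp]
      by_cases h : p ∣ j
      · rw [if_pos h]
        have h2 : ¬ p ^ i ∣ j / p := by
          intro hd
          apply hj
          have := mul_dvd_mul_left p hd
          rwa [Nat.mul_div_cancel' h, ← pow_succ'] at this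
        rw [(ih k x).2 _ h2, zero_pow hp.ne_zero]
      · rw [if_neg h]
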